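/- Let k[[x,y]] be a power series ring over a field, u, v units, and k, l, p positive integers. Then dim_k k[[x,y]]/(x^{pk}, y^{pl}, u x^k + v y^l) = pkl. -/

import Mathlib

open MvPowerSeries Finsupp

namespace Stmt12



variable {K : Type*} [Field K]


/-- The exponent `x^i y^j` as a finitely supported function on `Fin 2`. -/
noncomputable def ee (i j : ℕ) : Fin 2 →₀ ℕ := Finsupp.single 0 i + Finsupp.single 1 j

lemma ee_apply0 (i j : ℕ) : ee i j 0 = i := by
  simp [ee, Finsupp.single_apply]

lemma ee_apply1 (i j : ℕ) : ee i j 1 = j := by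
  simp [ee, Finsupp.single_apply]

lemma eq_ee (d : Fin 2 →₀ ℕ) : d = ee (d 0) (d 1) := by
  ext x
  fin_cases x <;> simp [ee, Finsupp.single_apply]

lemma mono_eq (i j : ℕ) :
    (X 0 : MvPowerSeries (Fin 2) K) ^ i * X 1 ^ j = monomial (ee i j) 1 := by
  rw [X_pow_eq, X_pow_eq, monomial_mul_monomial, one_mul]; rfl

lemma coeff_boxsum (a b : ℕ) (c : ℕ → ℕ → K) (d : Fin 2 →₀ ℕ) :
    coeff d (∑ ij : Fin a × Fin b, c ij.1 ij.2 •
        ((X 0 : MvPowerSeries (Fin 2) K) ^ (ij.1 : ℕ) * X 1 ^ (ij.2 : ℕ))) =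
      if d 0 < a ∧ d 1 < b then c (d 0) (d 1) else 0 := by
  classical
  rw [map_sum]
  have hterm : ∀ ij : Fin a × Fin b,
      coeff d (c ij.1 ij.2 • ((X 0 : MvPowerSeries (Fin 2) K) ^ (ij.1 : ℕ) * X 1 ^ (ij.2 : ℕ)))
        = if d = ee (ij.1 : ℕ) (ij.2 : ℕ) then c ij.1 ij.2 else 0 := by
    intro ij
    rw [map_smul, mono_eq, coeff_monomial, smul_eq_mul, mul_ite, mul_one, mul_zero]
  simp_rw [hterm]
  by_cases hd : d 0 < a ∧ d 1 < b
  · rw [if_pos hd]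
    rw [Finset.sum_eq_single (⟨⟨d 0, hd.1⟩, ⟨d 1, hd.2⟩⟩ : Fin a × Fin b)]
    · rw [if_pos (eq_ee d)]
    · intro ij _ hne
      rw [if_neg]
      intro h
      apply hne
      have h0 : (ij.1 : ℕ) = d 0 := by rw [h, ee_apply0]
      have h1 : (ij.2 : ℕ) = d 1 := by rw [h, ee_apply1]
      exact Prod.ext (Fin.ext h0) (Fin.ext h1)
    · intro h; exact absurd (Finset.mem_univ _) h
  · rw [if_neg hd]
    apply Finset.sum_eq_zero
    intro ij _
    rw [if_neg]
    intro h
    exact hd ⟨by rw [h, ee_apply0]; exact ij.1.isLt, by rw [h, ee_apply1]; exact ij.2.isLt⟩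

lemma split (f : MvPowerSeries (Fin 2) K) (a b : ℕ) :
    ∃ h₁ h₂ r, f = r + X 0 ^ a * h₁ + X 1 ^ b * h₂ ∧
      r ∈ Submodule.span K (Set.range fun ij : Fin a × Fin b =>
        (X 0 : MvPowerSeries (Fin 2) K) ^ (ij.1 : ℕ) * X 1 ^ (ij.2 : ℕ)) := by
  classical
  set r : MvPowerSeries (Fin 2) K :=
    ∑ ij : Fin a × Fin b, coeff (ee ij.1 ij.2) f • (X 0 ^ (ij.1 : ℕ) * X 1 ^ (ij.2 : ℕ))
    with hrdef
  have hrc : ∀ d, coeff d r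
      = if d 0 < a ∧ d 1 < b then coeff (ee (d 0) (d 1)) f else 0 :=
    fun d => coeff_boxsum a b (fun i j => coeff (ee i j) f) d
  set g₁ : MvPowerSeries (Fin 2) K := fun d => if a ≤ d 0 then coeff d f else 0 with hg1
  set g₂ : MvPowerSeries (Fin 2) K :=
    fun d => if d 0 < a ∧ b ≤ d 1 then coeff d f else 0 with hg2
  obtain ⟨h₁, hh₁⟩ : (X 0 : MvPowerSeries (Fin 2) K) ^ a ∣ g₁ := by
    rw [X_pow_dvd_iff]
    intro m hm
    show (if a ≤ m 0 then coeff m f else 0) = 0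
    rw [if_neg (by omega)]
  obtain ⟨h₂, hh₂⟩ : (X 1 : MvPowerSeries (Fin 2) K) ^ b ∣ g₂ := by
    rw [X_pow_dvd_iff]
    intro m hm
    show (if m 0 < a ∧ b ≤ m 1 then coeff m f else 0) = 0
    rw [if_neg (by omega)]
  refine ⟨h₁, h₂, r, ?_, ?_⟩
  · rw [← hh₁, ← hh₂]
    ext d
    have c1 : coeff d g₁ = if a ≤ d 0 then coeff d f else 0 := rfl
    have c2 : coeff d g₂ = if d 0 < a ∧ b ≤ d 1 then coeff d f else 0 := rfl
    rw [map_add, map_add, hrc, c1, c2, ← eq_ee d]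
    split_ifs <;> first | ring1 | (exfalso; omega)
  · exact Submodule.sum_mem _ fun ij _ =>
      Submodule.smul_mem _ _ (Submodule.subset_span ⟨ij, rfl⟩)

lemma indep (w : MvPowerSeries (Fin 2) K) (k l p : ℕ)
    (c : ℕ → ℕ → K) (P : MvPowerSeries (Fin 2) K)
    (hPc : ∀ d, coeff d P = if d 0 < k ∧ d 1 < p * l then c (d 0) (d 1) else 0)
    (A B : MvPowerSeries (Fin 2) K)
    (hAB : A * (X 0 ^ k + w * X 1 ^ l) + B * X 1 ^ (p * l) = P) :
    P = 0 := by
  have key : ∀ m, m ≤ p → (X 1 : MvPowerSeries (Fin 2) K) ^ (m * l) ∣ A := by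
    intro m
    induction m with
    | zero => intro _; simpa using one_dvd A
    | succ m ih =>
      intro hm
      obtain ⟨A₁, hA₁⟩ := ih (Nat.le_of_succ_le hm)
      have hdvd : (X 1 : MvPowerSeries (Fin 2) K) ^ l ∣ A₁ := by
        rw [X_pow_dvd_iff]
        intro d hd
        have hE0 : (ee k (m * l) + d) 0 = k + d 0 := by
          rw [Finsupp.add_apply, ee_apply0]
        have hE1 : (ee k (m * l) + d) 1 = m * l + d 1 := by
          rw [Finsupp.add_apply, ee_apply1]
        have hcoef := congrArg (coeff (ee k (m * l) + d)) hAB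
        have expand2 : A * (X 0 ^ k + w * X 1 ^ l) = monomial (ee k (m * l)) 1 * A₁
            + X 1 ^ ((m + 1) * l) * (w * A₁) := by
          rw [hA₁, ← mono_eq, add_mul m 1 l, one_mul, pow_add]
          ring
        rw [map_add, expand2, map_add, coeff_add_monomial_mul] at hcoef
        have z1 : coeff (ee k (m * l) + d)
            ((X 1 : MvPowerSeries (Fin 2) K) ^ ((m + 1) * l) * (w * A₁)) = 0 := by
          refine X_pow_dvd_iff.mp (dvd_mul_right _ _) _ ?_
          rw [hE1, add_mul m 1 l, one_mul]
          exact Nat.add_lt_add_left hd _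
        have z2 : coeff (ee k (m * l) + d) (B * X 1 ^ (p * l)) = 0 := by
          refine X_pow_dvd_iff.mp (dvd_mul_left _ _) _ ?_
          rw [hE1]
          have h1 : m * l + d 1 < (m + 1) * l := by
            rw [add_mul m 1 l, one_mul]; exact Nat.add_lt_add_left hd _
          exact lt_of_lt_of_le h1 (Nat.mul_le_mul_right l hm)
        have z3 : coeff (ee k (m * l) + d) P = 0 := by
          rw [hPc, if_neg]
          rw [hE0]
          omega
        rw [z1, z2, z3, one_mul, add_zero, add_zero] at hcoef
        exact hcoef
      obtain ⟨A₂, hA₂⟩ := hdvd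
      exact ⟨A₂, by rw [hA₁, hA₂, add_mul m 1 l, one_mul, pow_add, mul_assoc]⟩
  obtain ⟨A₂, hA₂⟩ := key p le_rfl
  have hPdvd : (X 1 : MvPowerSeries (Fin 2) K) ^ (p * l) ∣ P :=
    ⟨A₂ * (X 0 ^ k + w * X 1 ^ l) + B, by rw [← hAB, hA₂]; ring⟩
  ext d
  rw [map_zero]
  by_cases hcase : d 1 < p * l
  · exact X_pow_dvd_iff.mp hPdvd d hcase
  · rw [hPc, if_neg (by omega)]



lemma indep2 (w : MvPowerSeries (Fin 2) K) (k l p : ℕ)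
    (J : Ideal (MvPowerSeries (Fin 2) K))
    (hJle : J ≤ Ideal.span {(X 0 : MvPowerSeries (Fin 2) K) ^ k + w * X 1 ^ l,
      X 1 ^ (p * l)}) :
    LinearIndependent K (fun ij : Fin k × Fin (p * l) =>
      Ideal.Quotient.mkₐ K J ((X 0 : MvPowerSeries (Fin 2) K) ^ (ij.1 : ℕ)
        * X 1 ^ (ij.2 : ℕ))) := by
  classical
  rw [Fintype.linearIndependent_iff]
  intro c hc
  set cf : ℕ → ℕ → K := fun i j =>
    if h : i < k ∧ j < p * l then c (⟨i, h.1⟩, ⟨j, h.2⟩) else 0 with hcf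
  have hcfeq : ∀ ij : Fin k × Fin (p * l), cf (ij.1 : ℕ) (ij.2 : ℕ) = c ij := by
    intro ij
    rw [hcf]
    simp only [dif_pos (And.intro ij.1.isLt ij.2.isLt), Fin.eta, Prod.mk.eta]
  set P : MvPowerSeries (Fin 2) K :=
    ∑ ij : Fin k × Fin (p * l), cf ij.1 ij.2 • (X 0 ^ (ij.1 : ℕ) * X 1 ^ (ij.2 : ℕ))
    with hP
  have hπP : Ideal.Quotient.mkₐ K J P = 0 := by
    rw [hP, map_sum]
    calc ∑ ij : Fin k × Fin (p * l), Ideal.Quotient.mkₐ K J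
          (cf ij.1 ij.2 • (X 0 ^ (ij.1 : ℕ) * X 1 ^ (ij.2 : ℕ)))
        = ∑ ij : Fin k × Fin (p * l), c ij • Ideal.Quotient.mkₐ K J
          (X 0 ^ (ij.1 : ℕ) * X 1 ^ (ij.2 : ℕ)) := by
          refine Finset.sum_congr rfl fun ij _ => ?_
          rw [map_smul, hcfeq]
      _ = 0 := hc
  have hPJ : P ∈ Ideal.span {(X 0 : MvPowerSeries (Fin 2) K) ^ k + w * X 1 ^ l,
      X 1 ^ (p * l)} := by
    apply hJle
    rwa [Ideal.Quotient.mkₐ_eq_mk, Ideal.Quotient.eq_zero_iff_mem] at hπP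
  obtain ⟨A, B, hAB⟩ := Ideal.mem_span_pair.mp hPJ
  have hP0 : P = 0 := indep w k l p cf P (fun d => coeff_boxsum k (p * l) cf d) A B hAB
  intro ij
  have hco := coeff_boxsum k (p * l) cf (ee ij.1 ij.2)
  rw [← hP, hP0, map_zero,
    if_pos ⟨by rw [ee_apply0]; exact ij.1.isLt, by rw [ee_apply1]; exact ij.2.isLt⟩,
    ee_apply0, ee_apply1, hcfeq] at hco
  exact hco.symm


lemma spanning (w : MvPowerSeries (Fin 2) K) (k l p : ℕ)
    (J : Ideal (MvPowerSeries (Fin 2) K))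
    (hgJ : (X 0 : MvPowerSeries (Fin 2) K) ^ k + w * X 1 ^ l ∈ J)
    (hYJ : (X 1 : MvPowerSeries (Fin 2) K) ^ (p * l) ∈ J) :
    ∀ m, m ≤ p → ∀ f : MvPowerSeries (Fin 2) K,
      Ideal.Quotient.mkₐ K J (X 1 ^ ((p - m) * l) * f) ∈
        Submodule.span K (Set.range fun ij : Fin k × Fin (p * l) =>
          Ideal.Quotient.mkₐ K J (X 0 ^ (ij.1 : ℕ) * X 1 ^ (ij.2 : ℕ))) := by
  have hπ0 : ∀ x ∈ J, Ideal.Quotient.mkₐ K J x = 0 := fun x hx =>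
    Ideal.Quotient.eq_zero_iff_mem.mpr hx
  intro m
  induction m with
  | zero =>
    intro _ f
    have hmem : (X 1 : MvPowerSeries (Fin 2) K) ^ ((p - 0) * l) * f ∈ J := by
      simpa using Ideal.mul_mem_right f _ hYJ
    rw [hπ0 _ hmem]
    exact Submodule.zero_mem _
  | succ m ih =>
    intro hm f
    have hm' : m ≤ p := Nat.le_of_succ_le hm
    obtain ⟨h₁, h₂, r, hf, hr⟩ := split f k ((m + 1) * l)
    have hm'1 : (p - (m + 1)) + (m + 1) = p := by omega
    have e1 : p - m = (p - (m + 1)) + 1 := by omega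
    rw [hf]
    have expand : (X 1 : MvPowerSeries (Fin 2) K) ^ ((p - (m + 1)) * l)
          * (r + X 0 ^ k * h₁ + X 1 ^ ((m + 1) * l) * h₂)
        = X 1 ^ ((p - (m + 1)) * l) * r
          + ((X 0 ^ k + w * X 1 ^ l) * (X 1 ^ ((p - (m + 1)) * l) * h₁)
              - X 1 ^ ((p - m) * l) * (w * h₁))
          + X 1 ^ (p * l) * h₂ := by
      have hp1 : (X 1 : MvPowerSeries (Fin 2) K) ^ (p * l)
          = X 1 ^ ((p - (m + 1)) * l) * X 1 ^ ((m + 1) * l) := by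
        rw [← pow_add, ← add_mul, hm'1]
      have hp2 : (X 1 : MvPowerSeries (Fin 2) K) ^ ((p - m) * l)
          = X 1 ^ ((p - (m + 1)) * l) * X 1 ^ l := by
        rw [e1, add_mul (p - (m + 1)) 1 l, one_mul, pow_add]
      rw [hp1, hp2]
      ring
    rw [expand, map_add, map_add]
    refine Submodule.add_mem _ (Submodule.add_mem _ ?_ ?_) ?_
    · refine Submodule.span_induction
        (p := fun x _ => Ideal.Quotient.mkₐ K J (X 1 ^ ((p - (m + 1)) * l) * x) ∈
          Submodule.span K (Set.range fun ij : Fin k × Fin (p * l) =>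
            Ideal.Quotient.mkₐ K J (X 0 ^ (ij.1 : ℕ) * X 1 ^ (ij.2 : ℕ))))
        ?_ ?_ ?_ ?_ hr
      · rintro x ⟨ij, rfl⟩
        have hmul : (X 1 : MvPowerSeries (Fin 2) K) ^ ((p - (m + 1)) * l)
            * (X 0 ^ (ij.1 : ℕ) * X 1 ^ (ij.2 : ℕ))
            = X 0 ^ (ij.1 : ℕ) * X 1 ^ ((ij.2 : ℕ) + (p - (m + 1)) * l) := by
          rw [pow_add]; ring
        rw [hmul]
        have hlt : (ij.2 : ℕ) + (p - (m + 1)) * l < p * l := by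
          have h2 := ij.2.isLt
          calc (ij.2 : ℕ) + (p - (m + 1)) * l < (m + 1) * l + (p - (m + 1)) * l :=
                Nat.add_lt_add_right h2 _
          _ = ((p - (m + 1)) + (m + 1)) * l := by
                rw [Nat.add_comm ((m + 1) * l) ((p - (m + 1)) * l), ← add_mul]
          _ = p * l := by rw [hm'1]
        exact Submodule.subset_span ⟨(ij.1, ⟨(ij.2 : ℕ) + (p - (m + 1)) * l, hlt⟩), rfl⟩
      · rw [mul_zero, map_zero]; exact Submodule.zero_mem _
      · intro x y _ _ hx hy
        rw [mul_add, map_add]; exact Submodule.add_mem _ hx hy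
      · intro a x _ hx
        rw [mul_smul_comm, map_smul]; exact Submodule.smul_mem _ _ hx
    · rw [map_sub, hπ0 _ (Ideal.mul_mem_right _ _ hgJ), zero_sub]
      exact Submodule.neg_mem _ (ih hm' (w * h₁))
    · rw [hπ0 _ (Ideal.mul_mem_right _ _ hYJ)]
      exact Submodule.zero_mem _


end Stmt12

open Stmt12 in
/-- for a power series ring `K[[x,y]]`, units `u, v`, and positive
integers `k, l, p`, one has `dim_K K[[x,y]]/(x^(pk), y^(pl), u x^k + v y^l) = pkl`. -/
theorem stmt12 (K : Type*) [Field K] (u v : MvPowerSeries (Fin 2) K)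
    (hu : IsUnit u) (hv : IsUnit v) (k l p : ℕ)
    (hk : 0 < k) (hl : 0 < l) (hp : 0 < p) :
    Module.finrank K
      (MvPowerSeries (Fin 2) K ⧸
        Ideal.span {(X 0 : MvPowerSeries (Fin 2) K) ^ (p * k), X 1 ^ (p * l),
          u * X 0 ^ k + v * X 1 ^ l}) = p * k * l := by
  classical
  have hu1 : (↑hu.unit⁻¹ : MvPowerSeries (Fin 2) K) * u = 1 := hu.val_inv_mul
  have hu2 : u * (↑hu.unit⁻¹ : MvPowerSeries (Fin 2) K) = 1 := hu.mul_val_inv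
  set w : MvPowerSeries (Fin 2) K := ↑hu.unit⁻¹ * v with hw
  set g : MvPowerSeries (Fin 2) K := X 0 ^ k + w * X 1 ^ l with hgdef
  set J : Ideal (MvPowerSeries (Fin 2) K) := Ideal.span {g, X 1 ^ (p * l)} with hJ
  have hgJ : g ∈ J := Ideal.subset_span (by simp)
  have hYJ : (X 1 : MvPowerSeries (Fin 2) K) ^ (p * l) ∈ J := Ideal.subset_span (by simp)
  have hIJ : Ideal.span {(X 0 : MvPowerSeries (Fin 2) K) ^ (p * k), X 1 ^ (p * l),
      u * X 0 ^ k + v * X 1 ^ l} = J := by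
    apply le_antisymm
    · rw [Ideal.span_le]
      rintro x hx
      simp only [Set.mem_insert_iff, Set.mem_singleton_iff] at hx
      rcases hx with rfl | rfl | rfl
      · rw [SetLike.mem_coe, ← Ideal.Quotient.eq_zero_iff_mem]
        have h1 : Ideal.Quotient.mk J g = 0 := Ideal.Quotient.eq_zero_iff_mem.mpr hgJ
        have h2 : Ideal.Quotient.mk J (X 1 ^ (p * l)) = 0 :=
          Ideal.Quotient.eq_zero_iff_mem.mpr hYJ
        have hx : (Ideal.Quotient.mk J (X 0 : MvPowerSeries (Fin 2) K)) ^ k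
            = -(Ideal.Quotient.mk J w * Ideal.Quotient.mk J (X 1 : MvPowerSeries (Fin 2) K) ^ l) := by
          rw [hgdef, map_add, map_mul, map_pow, map_pow] at h1
          linear_combination h1
        have e1 : (X 0 : MvPowerSeries (Fin 2) K) ^ (p * k) = (X 0 ^ k) ^ p := by
          rw [← pow_mul, mul_comm]
        have e2 : -(Ideal.Quotient.mk J w
            * Ideal.Quotient.mk J (X 1 : MvPowerSeries (Fin 2) K) ^ l)
            = (-(Ideal.Quotient.mk J w))
              * Ideal.Quotient.mk J (X 1 : MvPowerSeries (Fin 2) K) ^ l := by ring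
        rw [e1, map_pow, map_pow, hx, e2, mul_pow, ← pow_mul, mul_comm l p,
          ← map_pow, h2, mul_zero]
      · exact hYJ
      · have h : u * X 0 ^ k + v * X 1 ^ l = u * g := by
          rw [hgdef, hw]
          linear_combination (-(v * (X 1 : MvPowerSeries (Fin 2) K) ^ l)) * hu2
        rw [SetLike.mem_coe, h]
        exact Ideal.mul_mem_left _ _ hgJ
    · rw [Ideal.span_le]
      rintro x hx
      simp only [Set.mem_insert_iff, Set.mem_singleton_iff] at hx
      rcases hx with rfl | rfl
      · have h : g = (↑hu.unit⁻¹ : MvPowerSeries (Fin 2) K) * (u * X 0 ^ k + v * X 1 ^ l) := by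
          rw [hgdef, hw]
          linear_combination (-((X 0 : MvPowerSeries (Fin 2) K) ^ k)) * hu1
        rw [SetLike.mem_coe, h]
        exact Ideal.mul_mem_left _ _ (Ideal.subset_span (by simp))
      · exact Ideal.subset_span (by simp)
  rw [hIJ]
  have hspan : ⊤ ≤ Submodule.span K (Set.range fun ij : Fin k × Fin (p * l) =>
      Ideal.Quotient.mkₐ K J ((X 0 : MvPowerSeries (Fin 2) K) ^ (ij.1 : ℕ)
        * X 1 ^ (ij.2 : ℕ))) := by
    intro q _
    obtain ⟨f, rfl⟩ := Ideal.Quotient.mk_surjective q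
    have h := spanning w k l p J hgJ hYJ p le_rfl f
    rw [Nat.sub_self, zero_mul, pow_zero, one_mul, Ideal.Quotient.mkₐ_eq_mk] at h
    exact h
  have hli := indep2 w k l p J (le_of_eq hJ)
  have B : Module.Basis (Fin k × Fin (p * l)) K (MvPowerSeries (Fin 2) K ⧸ J) :=
    Module.Basis.mk hli hspan
  rw [Module.finrank_eq_card_basis B, Fintype.card_prod, Fintype.card_fin, Fintype.card_fin]
  ring
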